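/- Let a be an alternative, σ = (a, σ_{−a}) and τ = (a, τ_{−a}) two linear orders over A sharing the same top alternative a, where σ_{−a}, τ_{−a} are linear orders over A∖{a}. Then for any selection/insertion sorting algorithm, f^{σ→τ}(ℓ) = f^{σ_{−a}→τ_{−a}}(ℓ) for all ℓ ∈ [m−2], and f^{σ→τ}(m−1) = 0, where |A| = m. -/

import Mathlib

/-- One step of a selection/insertion sorting algorithm at step index `k`
(0-indexed), transforming the current list `l` towards target ranking `τ`.
If `s = true` a selection-sort step is performed (promote the `τ`-most
preferred alternative of the suffix); if `s = false` an insertion-sort step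
is performed (promote the alternative currently at position `k`). In both
cases the picked alternative is promoted so that the top `k+1` alternatives
are in `τ`-order. The second component is the number of positions by which
the alternative was moved up. -/
def ddStep {α : Type*} [DecidableEq α] (τ l : List α) (k : ℕ) (s : Bool) :
    List α × ℕ :=
  match (if s then τ.filter (fun b => decide (b ∈ l.drop k)) else l.drop k).head? with
  | none => (l, 0)
  | some a =>
      let pre := l.take k
      let p := (pre.filter (fun b => decide (τ.idxOf b < τ.idxOf a))).length
      (pre.take p ++ a :: (pre.drop p ++ (l.drop k).erase a), l.idxOf a - p)

/-- The list maintained by the sorting algorithm `s : ℕ → Bool`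
(`true` = SEL, `false` = INS) after `k` steps, starting from `σ` with
target `τ`. -/
def ddRun {α : Type*} [DecidableEq α] (τ : List α) (s : ℕ → Bool) (σ : List α) :
    ℕ → List α
  | 0 => σ
  | k + 1 => (ddStep τ (ddRun τ s σ k) k (s k)).1

/-- The count function `f^{σ→τ}_𝒜(ℓ)`: the number of drag-and-drop operations
that move an alternative up by exactly `ℓ` positions during the execution of
the sorting algorithm `s` transforming `σ` into `τ`. -/
def countF {α : Type*} [DecidableEq α] (τ σ : List α) (s : ℕ → Bool) (ℓ : ℕ) : ℕ :=
  ((Finset.range τ.length).filter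
    (fun k => 0 < ℓ ∧ (ddStep τ (ddRun τ s σ k) k (s k)).2 = ℓ)).card

/-- Kendall's Tau distance between two rankings given as lists: the number of
ordered pairs `(a, b)` ranked `a` above `b` by `σ` but `b` above `a` by `τ`. -/
def kendall {α : Type*} [DecidableEq α] (σ τ : List α) : ℕ :=
  ((σ.toFinset ×ˢ σ.toFinset).filter
    (fun p => σ.idxOf p.1 < σ.idxOf p.2 ∧ τ.idxOf p.2 < τ.idxOf p.1)).card

namespace DDaux
variable {α : Type*} [DecidableEq α]

/-- number of inversions in which `c` is the τ-lower element. -/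
def dd (σ τ : List α) (c : α) : ℕ :=
  (σ.filter fun b => decide (σ.idxOf b < σ.idxOf c ∧ τ.idxOf c < τ.idxOf b)).length

theorem length_filter_add (p : α → Bool) (l : List α) :
    (l.filter p).length + (l.filter fun x => !p x).length = l.length := by
  simpa using (List.filter_append_perm p l).length_eq

theorem filter_mem_perm {σ P : List α} (hσ : σ.Nodup) (hP : P.Nodup)
    (hsub : ∀ x ∈ P, x ∈ σ) : (σ.filter fun x => decide (x ∈ P)).Perm P := by
  apply List.perm_of_nodup_nodup_toFinset_eq (hσ.filter _) hP
  ext x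
  simp only [List.mem_toFinset, List.mem_filter, decide_eq_true_eq]
  exact ⟨fun h => h.2, fun h => ⟨hsub x h, h⟩⟩

theorem head_filter_min {σ : List α} (hσ : σ.Nodup) (q : α → Bool) {c : α}
    (h : (σ.filter q).head? = some c) : ∀ x ∈ σ.filter q, σ.idxOf c ≤ σ.idxOf x := by
  induction σ with
  | nil => simp at h
  | cons y σ' ih =>
    rw [List.filter_cons] at h ⊢
    by_cases hy : q y
    · simp only [hy, if_pos] at h ⊢
      simp only [List.head?_cons, Option.some.injEq] at h
      subst h
      intro x _
      simp [List.idxOf_cons_self]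
    · simp only [hy, if_neg, Bool.false_eq_true, not_false_iff, if_neg] at h ⊢
      intro x hx
      have hx' : x ∈ σ' := List.mem_of_mem_filter hx
      have hc' : c ∈ σ' := List.mem_of_mem_filter (List.mem_of_mem_head? h)
      have hyσ : y ∉ σ' := (List.nodup_cons.mp hσ).1
      have hxy : y ≠ x := fun e => hyσ (e ▸ hx')
      have hcy : y ≠ c := fun e => hyσ (e ▸ hc')
      rw [List.idxOf_cons_ne _ hxy, List.idxOf_cons_ne _ hcy]
      exact Nat.succ_le_succ (ih (List.nodup_cons.mp hσ).2 h x hx)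

theorem sorted_split (f : α → ℕ) (t : ℕ) : ∀ {P : List α},
    P.Pairwise (fun x y => f x < f y) →
    ∃ P₁ P₂, P = P₁ ++ P₂ ∧ P₁ = P.filter (fun b => decide (f b < t)) ∧
      (∀ b ∈ P₁, f b < t) ∧ ∀ b ∈ P₂, ¬ f b < t := by
  intro P hP
  induction P with
  | nil => exact ⟨[], [], by simp⟩
  | cons x P ih =>
    obtain ⟨hx, hP'⟩ := List.pairwise_cons.mp hP
    obtain ⟨P₁, P₂, h1, h2, h3, h4⟩ := ih hP'
    by_cases hxt : f x < t
    · exact ⟨x :: P₁, P₂, by simp [h1], by simp [List.filter_cons, hxt, h2],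
        by simpa [hxt] using h3, h4⟩
    · refine ⟨[], x :: P, by simp, ?_, by simp, ?_⟩
      · rw [List.filter_cons, if_neg (by simpa using hxt)]
        rw [List.filter_eq_nil_iff.mpr]
        intro b hb
        simp only [decide_eq_true_eq]
        exact fun hbt => hxt (lt_trans (hx b hb) hbt |>.trans_le le_rfl) |>.elim
      · intro b hb
        rcases List.mem_cons.mp hb with rfl | hb
        · exact hxt
        · exact fun hbt => hxt (lt_trans (hx b hb) hbt)

set_option linter.unusedSectionVars false

def Good (σ τ P : List α) : Prop :=
  P.Nodup ∧ (∀ x ∈ P, x ∈ σ) ∧ P.Pairwise (fun x y => τ.idxOf x < τ.idxOf y) ∧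
    ∀ b ∈ P, ∀ c ∈ σ, c ∉ P → σ.idxOf c < σ.idxOf b → τ.idxOf b < τ.idxOf c


theorem length_filter_erase (σ : List α) (hσ : σ.Nodup) (c : α) (hc : c ∈ σ)
    (p q : α → Bool) (hpq : ∀ x ∈ σ, x ≠ c → p x = q x) (hqc : q c = false) :
    (σ.filter p).length = (σ.filter q).length + (if p c then 1 else 0) := by
  obtain ⟨σ₁, σ₂, rfl⟩ := List.append_of_mem hc
  have hσm : (c :: (σ₁ ++ σ₂)).Nodup := List.nodup_middle.mp hσ
  have hcσ₁ : c ∉ σ₁ := fun h => (List.nodup_cons.mp hσm).1 (List.mem_append.mpr (Or.inl h))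
  have hcσ₂ : c ∉ σ₂ := fun h => (List.nodup_cons.mp hσm).1 (List.mem_append.mpr (Or.inr h))
  have e1 : σ₁.filter p = σ₁.filter q :=
    List.filter_congr fun x hx => hpq x (by simp [hx]) (fun e => hcσ₁ (e ▸ hx))
  have e2 : σ₂.filter p = σ₂.filter q :=
    List.filter_congr fun x hx => hpq x (by simp [hx]) (fun e => hcσ₂ (e ▸ hx))
  rw [List.filter_append, List.filter_append, List.filter_cons, List.filter_cons, e1, e2, hqc]
  by_cases hpc : p c
  · rw [if_pos (by simp [hpc]), if_pos hpc]
    simp only [Bool.false_eq_true, if_neg, not_false_iff]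
    simp only [List.length_append, List.length_cons]
    omega
  · rw [if_neg (by simp [hpc]), if_neg hpc]
    simp only [Bool.false_eq_true, if_neg, not_false_iff]
    simp

theorem ddStep_spec {σ τ P : List α} (hσ : σ.Nodup) (hp : σ.Perm τ) (hG : Good σ τ P)
    (hk : P.length < σ.length) (s : Bool) :
    ∃ c P', c ∈ σ ∧ c ∉ P ∧ Good σ τ P' ∧ P'.length = P.length + 1 ∧
      (∀ x, x ∈ P' ↔ x ∈ P ∨ x = c) ∧
      (ddStep τ (P ++ σ.filter fun x => decide (x ∉ P)) P.length s).1
        = P' ++ σ.filter (fun x => decide (x ∉ P')) ∧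
      (ddStep τ (P ++ σ.filter fun x => decide (x ∉ P)) P.length s).2 = dd σ τ c := by
  obtain ⟨hPnd, hPsub, hPsort, hI⟩ := hG
  have hτnd : τ.Nodup := hp.nodup hσ
  set R : List α := σ.filter fun x => decide (x ∉ P) with hRdef
  set l : List α := P ++ R with hldef
  have hmemR : ∀ x, x ∈ R ↔ x ∈ σ ∧ x ∉ P := by
    intro x; simp [hRdef, List.mem_filter]
  have hRnd : R.Nodup := hσ.filter _
  have hlenP : (σ.filter fun x => decide (x ∈ P)).length = P.length :=
    (filter_mem_perm hσ hPnd hPsub).length_eq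
  have hlenR : R.length = σ.length - P.length := by
    have h2 := length_filter_add (fun x => decide (x ∈ P)) σ
    have h3 : (σ.filter fun x => !decide (x ∈ P)) = R := by
      simp [hRdef]
    rw [h3, hlenP] at h2
    omega
  have hR0 : R ≠ [] := by
    intro h
    rw [h] at hlenR
    simp at hlenR
    omega
  have hdrop : l.drop P.length = R := List.drop_left
  have htake : l.take P.length = P := List.take_left
  -- obtain the chosen element
  obtain ⟨c, hc, hcσ, hcP, key1⟩ :
      ∃ c, (if s then τ.filter (fun b => decide (b ∈ R)) else R).head? = some c ∧
        c ∈ σ ∧ c ∉ P ∧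
        (∀ x ∈ σ, x ∉ P → x ≠ c → σ.idxOf x < σ.idxOf c → τ.idxOf c < τ.idxOf x) := by
    cases s with
    | false =>
      obtain ⟨c0, R', hR⟩ := List.exists_cons_of_ne_nil hR0
      refine ⟨c0, by simp [hR], ?_, ?_, ?_⟩
      · exact ((hmemR c0).mp (by simp [hR])).1
      · exact ((hmemR c0).mp (by simp [hR])).2
      · intro x hx hxP _ hlt
        have hmin : σ.idxOf c0 ≤ σ.idxOf x := by
          refine head_filter_min hσ _ (by rw [← hRdef, hR]; rfl) x ?_
          rw [← hRdef, hmemR]  -- membership in filter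
          exact ⟨hx, hxP⟩
        omega
    | true =>
      have hFne : τ.filter (fun b => decide (b ∈ R)) ≠ [] := by
        obtain ⟨c0, R', hR⟩ := List.exists_cons_of_ne_nil hR0
        have hc0 : c0 ∈ τ.filter (fun b => decide (b ∈ R)) := by
          rw [List.mem_filter]
          have h1 : c0 ∈ R := by simp [hR]
          exact ⟨hp.subset ((hmemR c0).mp h1).1, by simpa using h1⟩
        exact List.ne_nil_of_mem hc0
      obtain ⟨c0, F', hF⟩ := List.exists_cons_of_ne_nil hFne
      have hc0F : c0 ∈ τ.filter (fun b => decide (b ∈ R)) := by simp [hF]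
      have hc0R : c0 ∈ R := by simpa using (List.mem_filter.mp hc0F).2
      refine ⟨c0, by simp [hF], ((hmemR c0).mp hc0R).1, ((hmemR c0).mp hc0R).2, ?_⟩
      intro x hx hxP hxc _
      have hxF : x ∈ τ.filter (fun b => decide (b ∈ R)) := by
        rw [List.mem_filter]
        exact ⟨hp.subset hx, by simp [hmemR x, hx, hxP]⟩
      have hmin : τ.idxOf c0 ≤ τ.idxOf x := by
        refine head_filter_min hτnd _ (by rw [hF]; rfl) x hxF
      have : τ.idxOf c0 ≠ τ.idxOf x :=
        fun e => hxc ((List.idxOf_inj (hp.subset hx)).mp e.symm)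
      omega

  -- reduce the step
  set p : ℕ := (P.filter fun b => decide (τ.idxOf b < τ.idxOf c)).length with hpdef
  have hstep : ddStep τ l P.length s =
      (P.take p ++ c :: (P.drop p ++ R.erase c), l.idxOf c - p) := by
    rw [ddStep, htake, hdrop, hc]
  -- sorted split of P at c
  obtain ⟨P₁, P₂, hPsplit, hP₁eq, hP₁lt, hP₂ge⟩ :=
    sorted_split (fun b => τ.idxOf b) (τ.idxOf c) hPsort
  have hplen : P₁.length = p := by rw [hP₁eq, hpdef]
  have htakep : P.take p = P₁ := by rw [hPsplit]; exact List.take_left' hplen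
  have hdropp : P.drop p = P₂ := by rw [hPsplit]; exact List.drop_left' hplen
  set P' : List α := P₁ ++ c :: P₂ with hP'def
  have hP'mem : ∀ x, x ∈ P' ↔ x ∈ P ∨ x = c := by
    intro x
    simp only [hP'def, hPsplit, List.mem_append, List.mem_cons]
    tauto
  have hinj : ∀ x ∈ σ, ∀ y ∈ σ, τ.idxOf x = τ.idxOf y → x = y := by
    intro x hx y hy h
    exact (List.idxOf_inj (hp.subset hx)).mp h
  have hP₂gt : ∀ b ∈ P₂, τ.idxOf c < τ.idxOf b := by
    intro b hb
    have hbP : b ∈ P := by rw [hPsplit]; simp [hb]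
    have hne : τ.idxOf c ≠ τ.idxOf b :=
      fun e => hcP (hinj c hcσ b (hPsub b hbP) e ▸ hbP)
    have := hP₂ge b hb
    omega
  have hGood' : Good σ τ P' := by
    refine ⟨?_, ?_, ?_, ?_⟩
    · have : P'.Perm (c :: P) := by
        rw [hP'def, hPsplit]; exact List.perm_middle
      exact this.nodup_iff.mpr (List.nodup_cons.mpr ⟨hcP, hPnd⟩)
    · intro x hx
      rcases (hP'mem x).mp hx with h | rfl
      · exact hPsub x h
      · exact hcσ
    · rw [hP'def]
      have hPs := hPsplit ▸ hPsort
      rw [List.pairwise_append] at hPs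
      rw [List.pairwise_append]
      refine ⟨hPs.1, List.pairwise_cons.mpr ⟨hP₂gt, hPs.2.1⟩, ?_⟩
      intro x hx y hy
      rcases List.mem_cons.mp hy with rfl | hy
      · exact hP₁lt x hx
      · exact hPs.2.2 x hx y hy
    · intro b hb x hx hxP' hlt
      have hxP : x ∉ P := fun h => hxP' ((hP'mem x).mpr (Or.inl h))
      have hxc : x ≠ c := fun h => hxP' ((hP'mem x).mpr (Or.inr h))
      rcases (hP'mem b).mp hb with h | rfl
      · exact hI b h x hx hxP hlt
      · exact key1 x hx hxP hxc hlt
  have hP'len : P'.length = P.length + 1 := by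
    rw [hP'def, hPsplit]; simp; omega
  -- the resulting list
  have heraseR : R.erase c = σ.filter (fun x => decide (x ∉ P')) := by
    rw [hRnd.erase_eq_filter, hRdef, List.filter_filter]
    refine List.filter_congr ?_
    intro x hx
    by_cases h1 : x = c
    · simp [h1, hP'mem c]
    · by_cases h2 : x ∈ P <;> simp [h1, h2, hP'mem x]
  have hlist : (ddStep τ l P.length s).1 = P' ++ σ.filter (fun x => decide (x ∉ P')) := by
    rw [hstep, htakep, hdropp, heraseR, hP'def]
    simp
  -- the count
  have hcount : (ddStep τ l P.length s).2 = dd σ τ c := by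
    rw [hstep]
    obtain ⟨σ₁, σ₂, hsd⟩ := List.append_of_mem hcσ
    have hσm : (c :: (σ₁ ++ σ₂)).Nodup := List.nodup_middle.mp (hsd ▸ hσ)
    have hcσ₁ : c ∉ σ₁ := fun h => (List.nodup_cons.mp hσm).1 (List.mem_append.mpr (Or.inl h))
    have hcσ₂ : c ∉ σ₂ := fun h => (List.nodup_cons.mp hσm).1 (List.mem_append.mpr (Or.inr h))
    have hσ₁₂ : (σ₁ ++ σ₂).Nodup := (List.nodup_cons.mp hσm).2
    have hσ₁nd : σ₁.Nodup := hσ₁₂.of_append_left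
    have hidxc : σ.idxOf c = σ₁.length := by
      rw [hsd, List.idxOf_append_of_notMem hcσ₁, List.idxOf_cons_self]
      omega
    have hidx1 : ∀ b ∈ σ₁, σ.idxOf b < σ₁.length := by
      intro b hb
      rw [hsd, List.idxOf_append_of_mem hb]
      exact (List.idxOf_lt_length_iff.mpr hb)
    have hidx2 : ∀ b ∈ σ₂, ¬ σ.idxOf b < σ₁.length := by
      intro b hb
      have hbσ₁ : b ∉ σ₁ := fun h => (List.disjoint_of_nodup_append hσ₁₂) h hb
      have hbc : c ≠ b := fun e => hcσ₂ (e ▸ hb)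
      rw [hsd, List.idxOf_append_of_notMem hbσ₁, List.idxOf_cons_ne _ hbc]
      omega
    have hmemσ₁ : ∀ b ∈ σ, σ.idxOf b < σ₁.length → b ∈ σ₁ := by
      intro b hb hlt
      rw [hsd, List.mem_append, List.mem_cons] at hb
      rcases hb with h | h | h
      · exact h
      · subst h; omega
      · exact absurd hlt (hidx2 b h)
    set A : List α := σ₁.filter (fun b => decide (τ.idxOf c < τ.idxOf b)) with hAdef
    have hddA : dd σ τ c = A.length := by
      rw [dd]
      set f : α → Bool :=
        fun b => decide (σ.idxOf b < σ.idxOf c ∧ τ.idxOf c < τ.idxOf b) with hf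
      have hre : σ.filter f = (σ₁ ++ c :: σ₂).filter f := by rw [← hsd]
      rw [hre, List.filter_append, List.filter_cons]
      have hfc : f c = false := by simp [hf]
      rw [hfc]
      simp only [Bool.false_eq_true, if_neg, not_false_iff]
      have h2 : σ₂.filter f = [] := by
        rw [List.filter_eq_nil_iff]
        intro b hb
        simp only [hf, decide_eq_true_eq, not_and]
        intro h
        exact absurd (hidxc ▸ h) (hidx2 b hb)
      rw [h2, List.append_nil]
      congr 1
      refine List.filter_congr ?_
      intro b hb
      have hlt : σ.idxOf b < σ.idxOf c := hidxc ▸ hidx1 b hb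
      simp [hf, hAdef, hlt]
    -- index of c in l
    have hlidx : l.idxOf c = P.length + R.idxOf c := by
      rw [hldef]; exact List.idxOf_append_of_notMem hcP
    set q : α → Bool := fun x => decide (x ∉ P) with hq
    have hRdec : R = σ₁.filter q ++ c :: σ₂.filter q := by
      rw [hRdef, hsd, List.filter_append, List.filter_cons, if_pos (by simp [hq, hcP])]
    have hRidx : R.idxOf c = (σ₁.filter q).length := by
      have : c ∉ σ₁.filter q := fun h => hcσ₁ (List.mem_of_mem_filter h)
      rw [hRdec, List.idxOf_append_of_notMem this, List.idxOf_cons_self]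
      omega
    have hpk : p ≤ P.length := by rw [hpdef]; exact List.length_filter_le _ _
    set B : List α := P.filter (fun b => !decide (τ.idxOf b < τ.idxOf c)) with hBdef
    have hpB : p + B.length = P.length := by
      rw [hpdef, hBdef]; exact length_filter_add _ P
    -- B has the same length as the members of σ₁ in P that are τ-above c
    have hBlen : B.length
        = (σ₁.filter (fun x => decide (x ∈ P) && decide (τ.idxOf c < τ.idxOf x))).length := by
      apply List.Perm.length_eq
      apply List.perm_of_nodup_nodup_toFinset_eq (hPnd.filter _) (hσ₁nd.filter _)
      ext x
      simp only [List.mem_toFinset, List.mem_filter, Bool.not_eq_true', decide_eq_false_iff_not,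
        Bool.and_eq_true, decide_eq_true_eq]
      constructor
      · rintro ⟨hxP, hxlt⟩
        have hxσ : x ∈ σ := hPsub x hxP
        have hxc : x ≠ c := fun e => hcP (e ▸ hxP)
        have h1 : τ.idxOf c < τ.idxOf x := by
          have : τ.idxOf x ≠ τ.idxOf c := fun e => hxc (hinj x hxσ c hcσ e)
          omega
        have h2 : ¬ σ.idxOf c < σ.idxOf x := fun h => hxlt (hI x hxP c hcσ hcP h)
        have h3 : σ.idxOf x ≠ σ.idxOf c :=
          fun e => hxc ((List.idxOf_inj hxσ).mp e)
        exact ⟨hmemσ₁ x hxσ (by omega), hxP, h1⟩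
      · rintro ⟨_, hxP, hxlt⟩
        exact ⟨hxP, by omega⟩
    have hQeq : σ₁.filter q
        = σ₁.filter (fun x => decide (x ∉ P) && decide (τ.idxOf c < τ.idxOf x)) := by
      refine List.filter_congr ?_
      intro x hx
      by_cases h : x ∈ P
      · simp [hq, h]
      · have hxσ : x ∈ σ := by rw [hsd]; exact List.mem_append.mpr (Or.inl hx)
        have hxc : x ≠ c := fun e => hcσ₁ (e ▸ hx)
        have := key1 x hxσ h hxc (by rw [hidxc]; exact hidx1 x hx)
        simp [hq, h, this]
    have hAsplit : A.length
        = (σ₁.filter (fun x => decide (x ∈ P) && decide (τ.idxOf c < τ.idxOf x))).length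
          + (σ₁.filter (fun x => decide (x ∉ P) && decide (τ.idxOf c < τ.idxOf x))).length := by
      have e1 : σ₁.filter (fun x => decide (x ∈ P) && decide (τ.idxOf c < τ.idxOf x))
          = A.filter (fun x => decide (x ∈ P)) := by
        rw [hAdef, List.filter_filter]
      have e2 : σ₁.filter (fun x => decide (x ∉ P) && decide (τ.idxOf c < τ.idxOf x))
          = A.filter (fun x => !decide (x ∈ P)) := by
        rw [hAdef, List.filter_filter]
        exact List.filter_congr (fun x _ => by by_cases h : x ∈ P <;> simp [h])
      rw [e1, e2]
      exact (length_filter_add _ A).symm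
    have hq₁ : (σ₁.filter q).length
        = (σ₁.filter (fun x => decide (x ∉ P) && decide (τ.idxOf c < τ.idxOf x))).length := by
      rw [hQeq]
    show List.idxOf c l - p = dd σ τ c
    omega
  exact ⟨c, P', hcσ, hcP, hGood', hP'len, hP'mem, hlist, hcount⟩

theorem ddRun_spec {σ τ : List α} (hσ : σ.Nodup) (hp : σ.Perm τ) (s : ℕ → Bool) :
    ∀ k, k ≤ σ.length → ∃ P : List α, Good σ τ P ∧ P.length = k ∧
      ddRun τ s σ k = P ++ σ.filter (fun x => decide (x ∉ P)) := by
  intro k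
  induction k with
  | zero =>
    intro _
    refine ⟨[], ⟨List.nodup_nil, by simp, by simp, by simp⟩, rfl, ?_⟩
    simp [ddRun]
  | succ k ih =>
    intro hk
    obtain ⟨P, hG, hlen, hrun⟩ := ih (Nat.le_of_succ_le hk)
    obtain ⟨c, P', _, _, hG', hlen', _, hlist, _⟩ :=
      ddStep_spec hσ hp hG (by omega) (s k)
    refine ⟨P', hG', by omega, ?_⟩
    rw [hlen] at hlist
    show (ddStep τ (ddRun τ s σ k) k (s k)).1 = _
    rw [hrun, hlist]

theorem count_aux {σ τ : List α} (hσ : σ.Nodup) (hp : σ.Perm τ) (s : ℕ → Bool) (ℓ : ℕ) :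
    ∀ j k (P : List α), Good σ τ P → P.length = k → k + j = σ.length →
      ddRun τ s σ k = P ++ σ.filter (fun x => decide (x ∉ P)) →
      ((Finset.Ico k σ.length).filter
          fun i => (ddStep τ (ddRun τ s σ i) i (s i)).2 = ℓ).card
        = (σ.filter fun x => decide (x ∉ P) && decide (dd σ τ x = ℓ)).length := by
  intro j
  induction j with
  | zero =>
    intro k P hG hlen hkj _
    have h1 : Finset.Ico k σ.length = ∅ := by
      rw [Finset.Ico_eq_empty_iff]; omega
    rw [h1]
    have hlenP : (σ.filter fun x => decide (x ∈ P)).length = P.length :=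
      (filter_mem_perm hσ hG.1 hG.2.1).length_eq
    have h2 := length_filter_add (fun x => decide (x ∈ P)) σ
    have h3 : (σ.filter fun x => !decide (x ∈ P)) = σ.filter fun x => decide (x ∉ P) := by
      simp
    have h4 : (σ.filter fun x => decide (x ∉ P)).length = 0 := by
      rw [← h3]; omega
    have h5 : (σ.filter fun x => decide (x ∉ P) && decide (dd σ τ x = ℓ)).length
        ≤ (σ.filter fun x => decide (x ∉ P)).length := by
      apply List.Sublist.length_le
      apply List.monotone_filter_right
      intro a ha
      exact (Bool.and_elim_left ha)
    simp only [Finset.filter_empty, Finset.card_empty]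
    omega
  | succ j ih =>
    intro k P hG hlen hkj hrun
    have hk : k < σ.length := by omega
    obtain ⟨c, P', hcσ, hcP, hG', hlen', hmem', hlist, hcount⟩ :=
      ddStep_spec hσ hp hG (by omega) (s k)
    have hstep : ddStep τ (ddRun τ s σ k) k (s k)
        = ddStep τ (P ++ σ.filter fun x => decide (x ∉ P)) P.length (s k) := by
      rw [hrun, hlen]
    have hrun' : ddRun τ s σ (k + 1) = P' ++ σ.filter (fun x => decide (x ∉ P')) := by
      show (ddStep τ (ddRun τ s σ k) k (s k)).1 = _
      rw [hstep, hlist]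
    have hIH := ih (k + 1) P' hG' (by omega) (by omega) hrun'
    have hIco : Finset.Ico k σ.length = insert k (Finset.Ico (k + 1) σ.length) :=
      (Finset.insert_Ico_add_one_left_eq_Ico hk).symm
    have hknot : k ∉ Finset.Ico (k + 1) σ.length := by simp
    rw [hIco, Finset.filter_insert]
    have hcnt : (ddStep τ (ddRun τ s σ k) k (s k)).2 = dd σ τ c := by
      rw [hstep, hcount]
    have hRHS := length_filter_erase σ hσ c hcσ
      (fun x => decide (x ∉ P) && decide (dd σ τ x = ℓ))
      (fun x => decide (x ∉ P') && decide (dd σ τ x = ℓ))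
      (fun x _ hxc => by
        have : (x ∈ P) = (x ∈ P') := by
          simp only [hmem' x, eq_iff_iff]
          exact ⟨Or.inl, fun h => h.resolve_right hxc⟩
        simp [this])
      (by simp [hmem' c])
    rw [hRHS]
    by_cases hdc : dd σ τ c = ℓ
    · rw [if_pos (by rw [hcnt]; exact hdc), if_pos (by simp [hcP, hdc])]
      rw [Finset.card_insert_of_notMem (fun h => hknot (Finset.mem_of_mem_filter _ h)), hIH]
    · rw [if_neg (by rw [hcnt]; exact hdc), if_neg (by simp [hdc]), hIH]
      omega

theorem countF_eq {σ τ : List α} (hσ : σ.Nodup) (hp : σ.Perm τ) (s : ℕ → Bool) {ℓ : ℕ}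
    (hl : 0 < ℓ) :
    countF τ σ s ℓ = (σ.filter fun c => decide (dd σ τ c = ℓ)).length := by
  rw [countF]
  have h1 : Finset.range τ.length = Finset.Ico 0 σ.length := by
    rw [Finset.range_eq_Ico, hp.length_eq]
  have h2 : Finset.filter
      (fun k => 0 < ℓ ∧ (ddStep τ (ddRun τ s σ k) k (s k)).2 = ℓ) (Finset.Ico 0 σ.length)
      = Finset.filter (fun k => (ddStep τ (ddRun τ s σ k) k (s k)).2 = ℓ)
        (Finset.Ico 0 σ.length) := by
    apply Finset.filter_congr
    intro x _
    simp [hl]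
  rw [h1, h2]
  have h3 := count_aux hσ hp s ℓ σ.length 0 []
    ⟨List.nodup_nil, by simp, by simp, by simp⟩ rfl (by omega) (by simp [ddRun])
  rw [h3]
  exact congrArg List.length (List.filter_congr (fun x _ => by simp))

theorem dd_le {σ τ : List α} {c : α} (hc : c ∈ σ) : dd σ τ c + 1 ≤ σ.length := by
  obtain ⟨σ₁, σ₂, rfl⟩ := List.append_of_mem hc
  rw [dd, List.filter_append, List.filter_cons, if_neg (by simp)]
  have h1 := List.length_filter_le
    (fun b => decide (List.idxOf b (σ₁ ++ c :: σ₂) < List.idxOf c (σ₁ ++ c :: σ₂)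
      ∧ τ.idxOf c < τ.idxOf b)) σ₁
  have h2 := List.length_filter_le
    (fun b => decide (List.idxOf b (σ₁ ++ c :: σ₂) < List.idxOf c (σ₁ ++ c :: σ₂)
      ∧ τ.idxOf c < τ.idxOf b)) σ₂
  simp only [List.length_append, List.length_cons]
  omega

end DDaux

/-- If `σ = (a, σ₋ₐ)` and `τ = (a, τ₋ₐ)` share the same top
alternative `a`, then for any selection/insertion sorting algorithm `s`,
`f^{σ→τ}(ℓ) = f^{σ₋ₐ→τ₋ₐ}(ℓ)` for all `ℓ ∈ [m-2]`, and `f^{σ→τ}(m-1) = 0`,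
where `m = |A|`. -/
theorem count_same_top_alternative {α : Type*} [DecidableEq α]
    (m : ℕ) (a : α) (σ' τ' : List α)
    (hσ : (a :: σ').Nodup) (hτ : (a :: τ').Nodup) (hperm : σ'.Perm τ')
    (hm : (a :: σ').length = m) (s : ℕ → Bool) :
    (∀ ℓ ∈ Finset.Icc 1 (m - 2), countF (a :: τ') (a :: σ') s ℓ = countF τ' σ' s ℓ)
      ∧ countF (a :: τ') (a :: σ') s (m - 1) = 0 := by
  classical
  obtain ⟨haσ, hσ'⟩ := List.nodup_cons.mp hσ
  have hbig : (a :: σ').Perm (a :: τ') := hperm.cons a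
  have hdd_a : DDaux.dd (a :: σ') (a :: τ') a = 0 := by
    rw [DDaux.dd]
    have h : (a :: σ').filter (fun b => decide ((a :: σ').idxOf b < (a :: σ').idxOf a
        ∧ (a :: τ').idxOf a < (a :: τ').idxOf b)) = [] := by
      rw [List.filter_eq_nil_iff]
      intro b _
      simp only [decide_eq_true_eq, not_and]
      intro h
      rw [List.idxOf_cons_self] at h
      omega
    rw [h]
    rfl
  have hdd_c : ∀ c ∈ σ', DDaux.dd (a :: σ') (a :: τ') c = DDaux.dd σ' τ' c := by
    intro c hc
    have hca : a ≠ c := fun e => haσ (e ▸ hc)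
    rw [DDaux.dd, DDaux.dd, List.filter_cons,
      if_neg (by simp [List.idxOf_cons_self])]
    refine congrArg List.length (List.filter_congr fun b hb => ?_)
    have hba : a ≠ b := fun e => haσ (e ▸ hb)
    simp [List.idxOf_cons_ne _ hba, List.idxOf_cons_ne _ hca, Nat.succ_lt_succ_iff,
      Nat.succ_eq_add_one]
  refine ⟨?_, ?_⟩
  · intro ℓ hℓ
    have hl : 0 < ℓ := (Finset.mem_Icc.mp hℓ).1
    rw [DDaux.countF_eq hσ hbig s hl, DDaux.countF_eq hσ' hperm s hl]
    rw [List.filter_cons, if_neg (by simp [hdd_a]; omega)]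
    exact congrArg List.length (List.filter_congr fun c hc => by simp [hdd_c c hc])
  · rcases Nat.eq_zero_or_pos (m - 1) with h0 | hpos
    · rw [h0, countF]
      simp
    · rw [DDaux.countF_eq hσ hbig s hpos]
      have h : (a :: σ').filter
          (fun c => decide (DDaux.dd (a :: σ') (a :: τ') c = m - 1)) = [] := by
        rw [List.filter_eq_nil_iff]
        intro c hc
        simp only [decide_eq_true_eq]
        rcases List.mem_cons.mp hc with rfl | hc
        · rw [hdd_a]; omega
        · rw [hdd_c c hc]
          have h2 := DDaux.dd_le (τ := τ') hc
          have hmlen : σ'.length + 1 = m := by simpa using hm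
          omega
      rw [h]
      rfl
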